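/- Define vector fields X_i : ℂ^m → ℂ^m by X_i(t) = E(t)^{∘i}, the i-th power of E(t) in the truncated polynomial algebra (so X_0 = e, the constant unit field, and X_1 = E). Then for all integers i, j ≥ 0 with i + j ≥ 1 one has [X_i, X_j] = (j − i) · X_{i+j−1}. -/

import Mathlib

open scoped BigOperators

noncomputable section

/-- The truncated-polynomial multiplication on `ℂ^m ≅ ℂ[X]/(X^m)`:
`(u ∘ v)_k = Σ_{i+j=k} u_i v_j`. -/
def tmul {m : ℕ} (u v : Fin m → ℂ) : Fin m → ℂ :=
  fun k => ∑ i : Fin m, ∑ j : Fin m,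
    if (i : ℕ) + (j : ℕ) = (k : ℕ) then u i * v j else 0

/-- The `i`-th standard basis vector of `ℂ^m` (zero if `i ≥ m`); `std 0` is the unit `e`. -/
def std {m : ℕ} (i : ℕ) : Fin m → ℂ := fun j => if (j : ℕ) = i then 1 else 0

/-- Lie bracket of vector fields on `ℂ^m`: `[X,Y](p) = DY(p)(X(p)) − DX(p)(Y(p))`. -/
def bracket {m : ℕ} (X Y : (Fin m → ℂ) → Fin m → ℂ) : (Fin m → ℂ) → Fin m → ℂ :=
  fun p => fderiv ℂ Y p (X p) - fderiv ℂ X p (Y p)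

/-- Pointwise truncated product of vector fields. -/
def pmul {m : ℕ} (X Y : (Fin m → ℂ) → Fin m → ℂ) : (Fin m → ℂ) → Fin m → ℂ :=
  fun p => tmul (X p) (Y p)

/-- Lie derivative of the multiplication `∘` along `X`:
`L_X(∘)(Y,Z) = [X, Y∘Z] − [X,Y]∘Z − Y∘[X,Z]`. -/
def lieD {m : ℕ} (X Y Z : (Fin m → ℂ) → Fin m → ℂ) : (Fin m → ℂ) → Fin m → ℂ :=
  fun p => bracket X (pmul Y Z) p - tmul (bracket X Y p) (Z p) - tmul (Y p) (bracket X Z p)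

/-- The Euler field `E(t) = (t_0 + a, t_1 + 1, t_2, …, t_{m−1})`. -/
def Efield {m : ℕ} (a : ℂ) : (Fin m → ℂ) → Fin m → ℂ :=
  fun p => p + a • std 0 + std 1

/-- Powers in the truncated polynomial algebra: `tpow u 0 = e`, `tpow u (k+1) = u ∘ tpow u k`. -/
def tpow {m : ℕ} (u : Fin m → ℂ) : ℕ → Fin m → ℂ
  | 0 => std 0
  | k + 1 => tmul u (tpow u k)

namespace Stmt3Aux

variable {m : ℕ}

lemma tmul_comm (u v : Fin m → ℂ) : tmul u v = tmul v u := by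
  funext k
  unfold tmul
  rw [Finset.sum_comm]
  refine Finset.sum_congr rfl fun i _ => Finset.sum_congr rfl fun j _ => ?_
  rw [Nat.add_comm (j : ℕ) (i : ℕ), mul_comm]

lemma tmul_add_left (u u' v : Fin m → ℂ) : tmul (u + u') v = tmul u v + tmul u' v := by
  funext k
  simp only [tmul, Pi.add_apply]
  rw [← Finset.sum_add_distrib]
  refine Finset.sum_congr rfl fun i _ => ?_
  rw [← Finset.sum_add_distrib]
  refine Finset.sum_congr rfl fun j _ => ?_
  split <;> ring

lemma tmul_smul_left (c : ℂ) (u v : Fin m → ℂ) : tmul (c • u) v = c • tmul u v := by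
  funext k
  simp only [tmul, Pi.smul_apply, smul_eq_mul, Finset.mul_sum]
  refine Finset.sum_congr rfl fun i _ => Finset.sum_congr rfl fun j _ => ?_
  split <;> ring

lemma tmul_add_right (u v v' : Fin m → ℂ) : tmul u (v + v') = tmul u v + tmul u v' := by
  rw [tmul_comm, tmul_add_left, tmul_comm v u, tmul_comm v' u]

lemma tmul_smul_right (c : ℂ) (u v : Fin m → ℂ) : tmul u (c • v) = c • tmul u v := by
  rw [tmul_comm, tmul_smul_left, tmul_comm]

lemma tmul_zero_right {u : Fin m → ℂ} : tmul u 0 = 0 := by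
  funext k
  unfold tmul
  simp

lemma tmul_std_zero (u : Fin m → ℂ) : tmul u (std 0) = u := by
  funext k
  unfold tmul std
  rw [Finset.sum_eq_single k]
  · rw [Finset.sum_eq_single (⟨0, k.pos⟩ : Fin m)]
    · simp
    · intro j _ hj
      have hj' : (j : ℕ) ≠ 0 := fun h => hj (Fin.ext h)
      simp [hj']
    · simp
  · intro i _ hi
    apply Finset.sum_eq_zero; intro j _
    have hi' : (i : ℕ) ≠ (k : ℕ) := fun h => hi (Fin.ext h)
    by_cases hj : (j : ℕ) = 0
    · have : (i : ℕ) + (j : ℕ) ≠ (k : ℕ) := by omega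
      simp [this]
    · simp [hj]
  · simp

lemma std_zero_tmul (u : Fin m → ℂ) : tmul (std 0) u = u := by
  rw [tmul_comm, tmul_std_zero]

lemma collapse1 (k : Fin m) (n l : ℕ) (A : ℂ) :
    (∑ x : Fin m, if n = (x : ℕ) ∧ (x : ℕ) + l = (k : ℕ) then A else 0)
      = if n + l = (k : ℕ) then A else 0 := by
  by_cases h : n + l = (k : ℕ)
  · have hn : n < m := by have := k.isLt; omega
    rw [Finset.sum_eq_single (⟨n, hn⟩ : Fin m)]
    · simp [h]
    · intro x _ hx
      have : n ≠ (x : ℕ) := fun hh => hx (Fin.ext hh.symm)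
      simp [this]
    · simp
  · rw [if_neg h]
    apply Finset.sum_eq_zero; intro x _
    have : ¬(n = (x : ℕ) ∧ (x : ℕ) + l = (k : ℕ)) := by
      rintro ⟨h1, h2⟩; exact h (by omega)
    rw [if_neg this]

lemma collapse2 (k : Fin m) (n i : ℕ) (A : ℂ) :
    (∑ x : Fin m, if n = (x : ℕ) ∧ i + (x : ℕ) = (k : ℕ) then A else 0)
      = if i + n = (k : ℕ) then A else 0 := by
  by_cases h : i + n = (k : ℕ)
  · have hn : n < m := by have := k.isLt; omega
    rw [Finset.sum_eq_single (⟨n, hn⟩ : Fin m)]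
    · simp [h]
    · intro x _ hx
      have : n ≠ (x : ℕ) := fun hh => hx (Fin.ext hh.symm)
      simp [this]
    · simp
  · rw [if_neg h]
    apply Finset.sum_eq_zero; intro x _
    have : ¬(n = (x : ℕ) ∧ i + (x : ℕ) = (k : ℕ)) := by
      rintro ⟨h1, h2⟩; exact h (by omega)
    rw [if_neg this]

lemma tmul_assoc (u v w : Fin m → ℂ) : tmul (tmul u v) w = tmul u (tmul v w) := by
  funext k
  have L : ∀ x l : Fin m, (if (x:ℕ)+(l:ℕ)=(k:ℕ) then tmul u v x * w l else 0)
      = ∑ i : Fin m, ∑ j : Fin m,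
          if (i:ℕ)+(j:ℕ) = (x:ℕ) ∧ (x:ℕ)+(l:ℕ)=(k:ℕ) then u i * v j * w l else 0 := by
    intro x l
    by_cases h : (x:ℕ)+(l:ℕ)=(k:ℕ)
    · rw [if_pos h]
      unfold tmul
      rw [Finset.sum_mul]
      refine Finset.sum_congr rfl fun i _ => ?_
      rw [Finset.sum_mul]
      refine Finset.sum_congr rfl fun j _ => ?_
      by_cases h2 : (i:ℕ)+(j:ℕ)=(x:ℕ) <;> simp [h, h2]
    · rw [if_neg h]
      symm; apply Finset.sum_eq_zero; intro i _; apply Finset.sum_eq_zero; intro j _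
      simp [h]
  have R : ∀ i x : Fin m, (if (i:ℕ)+(x:ℕ)=(k:ℕ) then u i * tmul v w x else 0)
      = ∑ j : Fin m, ∑ l : Fin m,
          if (j:ℕ)+(l:ℕ) = (x:ℕ) ∧ (i:ℕ)+(x:ℕ)=(k:ℕ) then u i * v j * w l else 0 := by
    intro i x
    by_cases h : (i:ℕ)+(x:ℕ)=(k:ℕ)
    · rw [if_pos h]
      unfold tmul
      rw [Finset.mul_sum]
      refine Finset.sum_congr rfl fun j _ => ?_
      rw [Finset.mul_sum]
      refine Finset.sum_congr rfl fun l _ => ?_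
      by_cases h2 : (j:ℕ)+(l:ℕ)=(x:ℕ) <;> simp [h, h2, mul_assoc]
    · rw [if_neg h]
      symm; apply Finset.sum_eq_zero; intro j _; apply Finset.sum_eq_zero; intro l _
      simp [h]
  show (∑ x : Fin m, ∑ l : Fin m, if (x:ℕ)+(l:ℕ)=(k:ℕ) then tmul u v x * w l else 0)
     = (∑ i : Fin m, ∑ x : Fin m, if (i:ℕ)+(x:ℕ)=(k:ℕ) then u i * tmul v w x else 0)
  calc (∑ x : Fin m, ∑ l : Fin m, if (x:ℕ)+(l:ℕ)=(k:ℕ) then tmul u v x * w l else 0)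
      = ∑ x : Fin m, ∑ l : Fin m, ∑ i : Fin m, ∑ j : Fin m,
          if (i:ℕ)+(j:ℕ) = (x:ℕ) ∧ (x:ℕ)+(l:ℕ)=(k:ℕ) then u i * v j * w l else 0 := by
        exact Finset.sum_congr rfl fun x _ => Finset.sum_congr rfl fun l _ => L x l
    _ = ∑ l : Fin m, ∑ i : Fin m, ∑ j : Fin m, ∑ x : Fin m,
          if (i:ℕ)+(j:ℕ) = (x:ℕ) ∧ (x:ℕ)+(l:ℕ)=(k:ℕ) then u i * v j * w l else 0 := by
        rw [Finset.sum_comm]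
        refine Finset.sum_congr rfl fun l _ => ?_
        rw [Finset.sum_comm]
        refine Finset.sum_congr rfl fun i _ => ?_
        rw [Finset.sum_comm]
    _ = ∑ l : Fin m, ∑ i : Fin m, ∑ j : Fin m,
          if ((i:ℕ)+(j:ℕ)) + (l:ℕ) = (k:ℕ) then u i * v j * w l else 0 := by
        exact Finset.sum_congr rfl fun l _ => Finset.sum_congr rfl fun i _ =>
          Finset.sum_congr rfl fun j _ => collapse1 k _ _ _
    _ = ∑ i : Fin m, ∑ j : Fin m, ∑ l : Fin m,
          if ((i:ℕ)+(j:ℕ)) + (l:ℕ) = (k:ℕ) then u i * v j * w l else 0 := by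
        rw [Finset.sum_comm]
        refine Finset.sum_congr rfl fun i _ => ?_
        rw [Finset.sum_comm]
    _ = ∑ i : Fin m, ∑ j : Fin m, ∑ l : Fin m,
          if (i:ℕ)+((j:ℕ) + (l:ℕ)) = (k:ℕ) then u i * v j * w l else 0 := by
        refine Finset.sum_congr rfl fun i _ => Finset.sum_congr rfl fun j _ =>
          Finset.sum_congr rfl fun l _ => ?_
        rw [Nat.add_assoc]
    _ = ∑ i : Fin m, ∑ j : Fin m, ∑ l : Fin m, ∑ x : Fin m,
          if (j:ℕ)+(l:ℕ) = (x:ℕ) ∧ (i:ℕ)+(x:ℕ)=(k:ℕ) then u i * v j * w l else 0 := by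
        refine Finset.sum_congr rfl fun i _ => Finset.sum_congr rfl fun j _ =>
          Finset.sum_congr rfl fun l _ => ?_
        rw [collapse2 k _ _ _]
    _ = ∑ i : Fin m, ∑ x : Fin m, ∑ j : Fin m, ∑ l : Fin m,
          if (j:ℕ)+(l:ℕ) = (x:ℕ) ∧ (i:ℕ)+(x:ℕ)=(k:ℕ) then u i * v j * w l else 0 := by
        refine Finset.sum_congr rfl fun i _ => ?_
        have h1 : (∑ j : Fin m, ∑ l : Fin m, ∑ x : Fin m,
            if (j:ℕ)+(l:ℕ) = (x:ℕ) ∧ (i:ℕ)+(x:ℕ)=(k:ℕ) then u i * v j * w l else 0)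
          = ∑ j : Fin m, ∑ x : Fin m, ∑ l : Fin m,
            if (j:ℕ)+(l:ℕ) = (x:ℕ) ∧ (i:ℕ)+(x:ℕ)=(k:ℕ) then u i * v j * w l else 0 :=
          Finset.sum_congr rfl fun j _ => Finset.sum_comm
        rw [h1, Finset.sum_comm]
    _ = (∑ i : Fin m, ∑ x : Fin m, if (i:ℕ)+(x:ℕ)=(k:ℕ) then u i * tmul v w x else 0) := by
        exact Finset.sum_congr rfl fun i _ => Finset.sum_congr rfl fun x _ => (R i x).symm

/-- `tmul` as a continuous bilinear map. -/
def mulCLM (m : ℕ) : (Fin m → ℂ) →L[ℂ] (Fin m → ℂ) →L[ℂ] (Fin m → ℂ) :=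
  LinearMap.toContinuousLinearMap
  { toFun := fun u => LinearMap.toContinuousLinearMap
      { toFun := fun v => tmul u v
        map_add' := fun v v' => tmul_add_right u v v'
        map_smul' := fun c v => tmul_smul_right c u v }
    map_add' := by
      intro u u'; ext v; exact congrFun (tmul_add_left u u' v) _
    map_smul' := by
      intro c u; ext v; exact congrFun (tmul_smul_left c u v) _ }

@[simp] lemma mulCLM_apply (u v : Fin m → ℂ) : mulCLM m u v = tmul u v := rfl

lemma tpow_succ' (u : Fin m → ℂ) (k : ℕ) : tpow u (k + 1) = tmul (tpow u k) u := by
  induction k with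
  | zero => simp [tpow, tmul_std_zero, std_zero_tmul]
  | succ n ih =>
    show tmul u (tpow u (n + 1)) = tmul (tmul u (tpow u n)) u
    rw [ih, tmul_assoc, tmul_comm (tpow u n) u]

lemma tpow_add (u : Fin m → ℂ) (a b : ℕ) :
    tpow u (a + b) = tmul (tpow u a) (tpow u b) := by
  induction a with
  | zero => simp [tpow, std_zero_tmul]
  | succ n ih =>
    have hn : n + 1 + b = (n + b) + 1 := by omega
    rw [hn]
    show tmul u (tpow u (n + b)) = tmul (tmul u (tpow u n)) (tpow u b)
    rw [ih, tmul_assoc]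

lemma hasFDerivAt_tpow (k : ℕ) (u : Fin m → ℂ) :
    HasFDerivAt (fun w => tpow w k) ((k : ℂ) • mulCLM m (tpow u (k - 1))) u := by
  induction k generalizing u with
  | zero =>
    have : ((0 : ℕ) : ℂ) • mulCLM m (tpow u (0 - 1)) = 0 := by
      rw [Nat.cast_zero]; exact zero_smul ℂ (mulCLM m (tpow u (0 - 1)))
    rw [this]
    exact hasFDerivAt_const _ _
  | succ n ih =>
    have h1 : HasFDerivAt (fun w : Fin m → ℂ => w)
        (ContinuousLinearMap.id ℂ (Fin m → ℂ)) u := hasFDerivAt_id u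
    have h2 := ih u
    have h3 := (mulCLM m).hasFDerivAt_of_bilinear h1 h2
    have heq : (fun w : Fin m → ℂ => mulCLM m w (tpow w n)) = fun w => tpow w (n + 1) := by
      funext w; rfl
    rw [heq] at h3
    refine h3.congr_fderiv (Eq.symm ?_)
    refine ContinuousLinearMap.ext fun d => ?_
    simp only [ContinuousLinearMap.add_apply, ContinuousLinearMap.precompR,
      ContinuousLinearMap.precompL, ContinuousLinearMap.smul_apply,
      ContinuousLinearMap.coe_comp', Function.comp_apply, ContinuousLinearMap.compL_apply,
      ContinuousLinearMap.flip_apply, ContinuousLinearMap.coe_id', id_eq, mulCLM_apply]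
    rw [tmul_smul_right]
    cases n with
    | zero =>
      simp [tpow, std_zero_tmul, tmul_std_zero]
    | succ n' =>
      have e1 : tmul u (tmul (tpow u (n' + 1 - 1)) d) = tmul (tpow u (n' + 1)) d := by
        rw [show n' + 1 - 1 = n' from rfl]
        calc tmul u (tmul (tpow u n') d) = tmul (tmul u (tpow u n')) d :=
              (tmul_assoc u (tpow u n') d).symm
          _ = tmul (tpow u (n' + 1)) d := rfl
      rw [e1, show n' + 1 + 1 - 1 = n' + 1 from rfl, tmul_comm d (tpow u (n' + 1))]
      funext k
      simp only [Pi.smul_apply, Pi.add_apply, smul_eq_mul]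
      push_cast
      ring

lemma hasFDerivAt_Efield (a : ℂ) (p : Fin m → ℂ) :
    HasFDerivAt (Efield a) (ContinuousLinearMap.id ℂ (Fin m → ℂ)) p := by
  exact ((hasFDerivAt_id (𝕜 := ℂ) p).add_const (a • std 0)).add_const (std 1)

lemma hasFDerivAt_X (a : ℂ) (k : ℕ) (p : Fin m → ℂ) :
    HasFDerivAt (fun q : Fin m → ℂ => tpow (Efield a q) k)
      ((k : ℂ) • mulCLM m (tpow (Efield a p) (k - 1))) p := by
  have := (hasFDerivAt_tpow k (Efield a p)).comp p (hasFDerivAt_Efield a p)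
  simpa using this

end Stmt3Aux

open Stmt3Aux

/-- With `X_i(t) := E(t)^{∘i}` (so `X_0 = e`, `X_1 = E`), for all integers
`i, j ≥ 0` with `i + j ≥ 1` one has `[X_i, X_j] = (j − i) · X_{i+j−1}`. -/
theorem stmt3 {m : ℕ} (hm : 1 ≤ m) (a : ℂ) (i j : ℕ) (hij : 1 ≤ i + j) :
    bracket (fun p : Fin m → ℂ => tpow (Efield a p) i)
        (fun p : Fin m → ℂ => tpow (Efield a p) j)
      = fun p : Fin m → ℂ => ((j : ℂ) - (i : ℂ)) • tpow (Efield a p) (i + j - 1) := by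
  funext p
  unfold bracket
  rw [(hasFDerivAt_X a i p).fderiv, (hasFDerivAt_X a j p).fderiv]
  simp only [ContinuousLinearMap.smul_apply, mulCLM_apply]
  rw [← tpow_add, ← tpow_add]
  rcases Nat.eq_zero_or_pos j with hj | hj
  · have hi : 1 ≤ i := by omega
    subst hj
    rw [show i - 1 + 0 = i + 0 - 1 by omega]
    funext k
    simp only [Pi.sub_apply, Pi.smul_apply, smul_eq_mul, Nat.cast_zero]
    ring
  · have h1 : j - 1 + i = i + j - 1 := by omega
    rw [h1]
    rcases Nat.eq_zero_or_pos i with hi | hi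
    · subst hi
      funext k
      simp only [Pi.sub_apply, Pi.smul_apply, smul_eq_mul, Nat.cast_zero]
      ring
    · have h2 : i - 1 + j = i + j - 1 := by omega
      rw [h2]
      funext k
      simp only [Pi.sub_apply, Pi.smul_apply, smul_eq_mul]
      ring
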